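/- Let $\mathcal{X}$ be a quasi-greedy basis with constant $C_q$ of a $p$-Banach space $\mathbb{X}$, $0<p\le 1$, and suppose $\mathcal{X}$ is bounded-oscillation unconditional with $\Phi(t) \le C(1-\log t)^{1/p}$ for all $0<t\le 1$. Let $0<t<1$, $f \in \mathbb{X}$, and let $A$ be a $t$-greedy set of $f$ (i.e., $|\boldsymbol{x}_n^*(f)| \ge t|\boldsymbol{x}_k^*(f)|$ for all $n\in A$, $k\notin A$). Then $\|S_A(f)\|^p \le (C_q^p + C^p(1-\log t))\|f\|^p$. -/

import Mathlib

theorem stmt14 {X : Type*} [AddCommGroup X] [Module ℂ X] (p : ℝ) (hp : 0 < p) (hp1 : p ≤ 1)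
    (N : X → ℝ) (hN0 : ∀ f, 0 ≤ N f)
    (hNp : ∀ f g, N (f + g) ^ p ≤ N f ^ p + N g ^ p)
    (hNh : ∀ (a : ℂ) (f : X), N (a • f) = ‖a‖ * N f)
    (e : ℕ → X) (φ : ℕ → X →ₗ[ℂ] ℂ)
    (hbi : ∀ n k, φ n (e k) = if n = k then 1 else 0)
    (hvanish : ∀ (g : X) (d : ℝ), 0 < d → {n : ℕ | d ≤ ‖(φ n g)‖}.Finite)
    (Cq C : ℝ)
    (hQG : ∀ (g : X) (B : Finset ℕ),
      (∀ n ∈ B, ∀ k ∉ B, ‖(φ k g)‖ ≤ ‖(φ n g)‖) →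
      N (∑ n ∈ B, φ n g • e n) ≤ Cq * N g)
    (hBOU : ∀ t : ℝ, 0 < t → t ≤ 1 → ∀ (g : X) (A : Finset ℕ) (hA : A.Nonempty),
      (A.sup' hA fun n => ‖(φ n g)‖)
        ≤ (1/t) * (A.inf' hA fun n => ‖(φ n g)‖) →
      N (∑ n ∈ A, φ n g • e n) ≤ C * (1 - Real.log t) ^ (1/p) * N g)
    (t : ℝ) (ht0 : 0 < t) (ht1 : t < 1)
    (f : X) (A : Finset ℕ)
    (hA : ∀ n ∈ A, ∀ k ∉ A, t * ‖(φ k f)‖ ≤ ‖(φ n f)‖) :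
    N (∑ n ∈ A, φ n f • e n) ^ p ≤ (Cq ^ p + C ^ p * (1 - Real.log t)) * N f ^ p := by
  classical
  set P : ℕ → Prop := fun n => ∀ k, k ∉ A → ‖(φ k f)‖ < ‖(φ n f)‖ with hP
  set B := A.filter P with hBdef
  set D := A.filter (fun n => ¬ P n) with hDdef
  have hsplit : (∑ n ∈ A, φ n f • e n)
      = (∑ n ∈ B, φ n f • e n) + (∑ n ∈ D, φ n f • e n) :=
    (Finset.sum_filter_add_sum_filter_not A P _).symm
  have hNzero : N 0 = 0 := by simpa using hNh 0 f
  have hlogt : Real.log t < 0 := Real.log_neg ht0 ht1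
  have hlog : (0:ℝ) < 1 - Real.log t := by linarith
  -- B is a greedy set
  have hBgreedy : ∀ n ∈ B, ∀ k ∉ B, ‖(φ k f)‖ ≤ ‖(φ n f)‖ := by
    intro n hn k hk
    rw [hBdef, Finset.mem_filter] at hn hk
    by_cases hkA : k ∈ A
    · have hkP : ¬ P k := fun h => hk ⟨hkA, h⟩
      have hex : ∃ k', k' ∉ A ∧ ‖(φ k f)‖ ≤ ‖(φ k' f)‖ := by
        by_contra hcon
        push_neg at hcon
        exact hkP (fun k' hk' => hcon k' hk')
      obtain ⟨k', hk'A, hk'⟩ := hex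
      exact le_trans hk' (le_of_lt (hn.2 k' hk'A))
    · exact le_of_lt (hn.2 k hkA)
  have hSB : N (∑ n ∈ B, φ n f • e n) ≤ Cq * N f := hQG f B hBgreedy
  -- the oscillation condition on D
  have hDosc : ∀ (hD : D.Nonempty),
      (D.sup' hD fun n => ‖(φ n f)‖)
        ≤ (1/t) * (D.inf' hD fun n => ‖(φ n f)‖) := by
    intro hD
    obtain ⟨n₀, hn₀, hsup⟩ := D.exists_mem_eq_sup' hD (fun n => ‖(φ n f)‖)
    obtain ⟨m₀, hm₀, hinf⟩ := D.exists_mem_eq_inf' hD (fun n => ‖(φ n f)‖)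
    rw [hsup, hinf]
    rw [hDdef, Finset.mem_filter] at hn₀ hm₀
    have hn₀P : ¬ P n₀ := hn₀.2
    have hex : ∃ k₀, k₀ ∉ A ∧ ‖(φ n₀ f)‖ ≤ ‖(φ k₀ f)‖ := by
      by_contra hcon
      push_neg at hcon
      exact hn₀P (fun k' hk' => hcon k' hk')
    obtain ⟨k₀, hk₀A, hk₀⟩ := hex
    have h1 : t * ‖(φ k₀ f)‖ ≤ ‖(φ m₀ f)‖ := hA m₀ hm₀.1 k₀ hk₀A
    rw [one_div, ← div_eq_inv_mul, le_div_iff₀ ht0]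
    calc ‖(φ n₀ f)‖ * t = t * ‖(φ n₀ f)‖ := mul_comm _ _
      _ ≤ t * ‖(φ k₀ f)‖ := by
          exact mul_le_mul_of_nonneg_left hk₀ (le_of_lt ht0)
      _ ≤ ‖(φ m₀ f)‖ := h1
  have key : N (∑ n ∈ A, φ n f • e n) ^ p
      ≤ N (∑ n ∈ B, φ n f • e n) ^ p + N (∑ n ∈ D, φ n f • e n) ^ p := by
    rw [hsplit]; exact hNp _ _
  rcases eq_or_lt_of_le (hN0 f) with hNf | hNf
  · -- N f = 0
    have hNf' : N f = 0 := hNf.symm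
    have hB0 : N (∑ n ∈ B, φ n f • e n) = 0 :=
      le_antisymm (by rw [hNf', mul_zero] at hSB; exact hSB) (hN0 _)
    have hD0 : N (∑ n ∈ D, φ n f • e n) = 0 := by
      rcases D.eq_empty_or_nonempty with hDe | hD
      · rw [hDe, Finset.sum_empty, hNzero]
      · have h := hBOU t ht0 (le_of_lt ht1) f D hD (hDosc hD)
        rw [hNf', mul_zero] at h
        exact le_antisymm h (hN0 _)
    have hfin : N (∑ n ∈ A, φ n f • e n) ^ p ≤ 0 := by
      rw [hB0, hD0, Real.zero_rpow (ne_of_gt hp)] at key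
      linarith
    rw [hNf', Real.zero_rpow (ne_of_gt hp), mul_zero]
    exact hfin
  · -- N f > 0
    have hCq0 : 0 ≤ Cq := by
      have h := hQG f ∅ (by simp)
      rw [Finset.sum_empty, hNzero] at h
      nlinarith
    have hC0 : 0 ≤ C := by
      have h := hBOU 1 one_pos le_rfl f {0} ⟨0, Finset.mem_singleton_self 0⟩ (by simp)
      rw [Real.log_one, sub_zero, Real.one_rpow, mul_one] at h
      nlinarith [hN0 (∑ n ∈ ({0} : Finset ℕ), φ n f • e n)]
    have hSBp : N (∑ n ∈ B, φ n f • e n) ^ p ≤ Cq ^ p * N f ^ p := by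
      calc N (∑ n ∈ B, φ n f • e n) ^ p ≤ (Cq * N f) ^ p :=
            Real.rpow_le_rpow (hN0 _) hSB (le_of_lt hp)
        _ = Cq ^ p * N f ^ p := Real.mul_rpow hCq0 (hN0 f)
    have hSDp : N (∑ n ∈ D, φ n f • e n) ^ p ≤ C ^ p * (1 - Real.log t) * N f ^ p := by
      rcases D.eq_empty_or_nonempty with hDe | hD
      · rw [hDe, Finset.sum_empty, hNzero, Real.zero_rpow (ne_of_gt hp)]
        exact mul_nonneg (mul_nonneg (Real.rpow_nonneg hC0 p) (le_of_lt hlog))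
          (Real.rpow_nonneg (hN0 f) p)
      · have hbou := hBOU t ht0 (le_of_lt ht1) f D hD (hDosc hD)
        have hpow : ((1 - Real.log t) ^ (1/p)) ^ p = 1 - Real.log t := by
          rw [← Real.rpow_mul (le_of_lt hlog), one_div_mul_cancel (ne_of_gt hp),
            Real.rpow_one]
        calc N (∑ n ∈ D, φ n f • e n) ^ p ≤ (C * (1 - Real.log t) ^ (1/p) * N f) ^ p :=
              Real.rpow_le_rpow (hN0 _) hbou (le_of_lt hp)
          _ = (C * (1 - Real.log t) ^ (1/p)) ^ p * N f ^ p :=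
              Real.mul_rpow (mul_nonneg hC0 (Real.rpow_nonneg (le_of_lt hlog) _)) (hN0 f)
          _ = C ^ p * ((1 - Real.log t) ^ (1/p)) ^ p * N f ^ p := by
              rw [Real.mul_rpow hC0 (Real.rpow_nonneg (le_of_lt hlog) _)]
          _ = C ^ p * (1 - Real.log t) * N f ^ p := by rw [hpow]
    calc N (∑ n ∈ A, φ n f • e n) ^ p
        ≤ N (∑ n ∈ B, φ n f • e n) ^ p + N (∑ n ∈ D, φ n f • e n) ^ p := key
      _ ≤ Cq ^ p * N f ^ p + C ^ p * (1 - Real.log t) * N f ^ p := by linarith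
      _ = (Cq ^ p + C ^ p * (1 - Real.log t)) * N f ^ p := by ring
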